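/- arXiv:0904.2880 — 2 statements merged into one kernel-verified Lean document; each statement's English description precedes it below -/
import Mathlib

section
/- There is a constant C depending only on n with the following property. Let S ⊂ ℝ × ℝⁿ be the double cone S := {(−|x|, x) : x ∈ ℝⁿ, x·e₁ ≥ |x| cos(π/8)} ∪ {(|x|, −x) : x ∈ ℝⁿ, x·e₁ ≥ |x| cos(π/8)}. Then for all unit vectors ω₀, ω₁ ∈ ℝⁿ with ω₀·e₁ ≥ cos(π/8) and ω₁·e₁ ≥ cos(π/8), and all x₁ ∈ ℝⁿ: (a) for every t ∈ ℝ, ∫_ℝ (1 + dist((t − t', x₁ + ω₁ t − t' ω₀), S))^{−50n} dt' ≤ C; and (b) for every t' ∈ ℝ, ∫_ℝ (1 + dist((t − t', x₁ + ω₁ t − t' ω₀), S))^{−50n} dt ≤ C. Here dist denotes Euclidean distance in ℝ^{1+n} from a point to the set S. -/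
open MeasureTheory Real Set
open scoped RealInnerProductSpace

noncomputable section
set_option maxHeartbeats 1000000

abbrev Spc (n : ℕ) := EuclideanSpace ℝ (Fin n)

/-- The first standard basis vector of ℝⁿ. -/
def e1 (n : ℕ) : Spc n :=
  (EuclideanSpace.equiv (Fin n) ℝ).symm (fun i => if (i : ℕ) = 0 then 1 else 0)

/-- Frequency support region for red waves of frequency 1. -/
def redSet (n : ℕ) : Set (Spc n) :=
  {ξ | 1 ≤ ‖ξ‖ ∧ ‖ξ‖ ≤ 2 ∧ (inner ℝ ξ (e1 n) : ℝ) ≥ ‖ξ‖ * Real.cos (π / 8)}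

/-- Frequency support region for blue waves of frequency 2^k. -/
def blueSet (n k : ℕ) : Set (Spc n) :=
  {ξ | (2 : ℝ) ^ k ≤ ‖ξ‖ ∧ ‖ξ‖ ≤ 2 ^ (k + 1) ∧ (inner ℝ ξ (e1 n) : ℝ) ≥ ‖ξ‖ * Real.cos (π / 8)}

/-- The wave with Fourier data `fp` on the upper cone and `fm` on the lower cone. -/
def wave (n : ℕ) (fp fm : Spc n → ℂ) : ℝ × Spc n → ℂ := fun p =>
  (∫ ξ : Spc n, fp ξ * Complex.exp (2 * π * Complex.I * ((p.1 * ‖ξ‖ + (inner ℝ p.2 ξ : ℝ) : ℝ) : ℂ))) +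
  (∫ ξ : Spc n, fm ξ * Complex.exp (2 * π * Complex.I * ((-(p.1 * ‖ξ‖) + (inner ℝ p.2 ξ : ℝ) : ℝ) : ℂ)))

/-- The mass of a wave with data `(fp, fm)`. -/
def mass (n : ℕ) (fp fm : Spc n → ℂ) : ℝ :=
  (∫ ξ : Spc n, ‖fp ξ‖ ^ 2) + (∫ ξ : Spc n, ‖fm ξ‖ ^ 2)

/-- `fp` is admissible data for a red wave of frequency 1. -/
def IsRedData (n : ℕ) (fp : Spc n → ℂ) : Prop :=
  Integrable fp ∧ MemLp fp 2 ∧ ∀ ξ, ξ ∉ redSet n → fp ξ = 0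

/-- `fm` is admissible data for a blue wave of frequency `2^k`. -/
def IsBlueData (n k : ℕ) (fm : Spc n → ℂ) : Prop :=
  Integrable fm ∧ MemLp fm 2 ∧ ∀ ξ, ξ ∉ blueSet n k → fm ξ = 0

/-- Axis-parallel spacetime cube of sidelength `R` centred at `(t₀, x₀)`. -/
def cube (n : ℕ) (t₀ : ℝ) (x₀ : Spc n) (R : ℝ) : Set (ℝ × Spc n) :=
  {p | |p.1 - t₀| ≤ R / 2 ∧ ∀ i, |p.2 i - x₀ i| ≤ R / 2}

/-- `ω` is an admissible tube direction. -/
def IsDir (n : ℕ) (ω : Spc n) : Prop :=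
  ‖ω‖ = 1 ∧ (inner ℝ ω (e1 n) : ℝ) ≥ Real.cos (π / 8)

/-- The `1 × 2^k` tube in direction `(1, ω)`. -/
def tube (n : ℕ) (t₀ : ℝ) (x₀ ω : Spc n) (k : ℕ) : Set (ℝ × Spc n) :=
  {p | |p.1 - t₀| ≤ 2 ^ k ∧ ‖p.2 - x₀ - (p.1 - t₀) • ω‖ ≤ 1}

/-- The infinite tube of radius `r` in direction `(1, ω)`. -/
def tubeR (n : ℕ) (t₀ : ℝ) (x₀ ω : Spc n) (r : ℝ) : Set (ℝ × Spc n) :=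
  {p | ‖p.2 - x₀ - (p.1 - t₀) • ω‖ ≤ r}

/-- The infinite tube in direction `(1, ω)`. -/
def infTube (n : ℕ) (t₀ : ℝ) (x₀ ω : Spc n) : Set (ℝ × Spc n) :=
  tubeR n t₀ x₀ ω 1

/-- Euclidean distance on spacetime `ℝ^{1+n}`. -/
def edist1n (n : ℕ) (p q : ℝ × Spc n) : ℝ :=
  Real.sqrt ((p.1 - q.1) ^ 2 + ‖p.2 - q.2‖ ^ 2)

/-- Euclidean distance from a point to a set in spacetime. -/
def distToSet (n : ℕ) (p : ℝ × Spc n) (S : Set (ℝ × Spc n)) : ℝ :=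
  ⨅ q : S, edist1n n p (q : ℝ × Spc n)

/-- The margin of a red wave of frequency 1 with data `fp`. -/
def margin (n : ℕ) (fp : Spc n → ℂ) : ℝ :=
  ⨅ ξ : Function.support fp, ⨅ ζ : {ζ : Spc n // ζ ∉ redSet n},
    edist1n n (‖(ξ : Spc n)‖, (ξ : Spc n)) (‖(ζ : Spc n)‖, (ζ : Spc n))

/-- `sup {‖φ(t,x)‖ : (t,x) ∈ Ω}`, with the convention `sup ∅ = 0`. -/
def supOn (n : ℕ) (φ : ℝ × Spc n → ℂ) (Ω : Set (ℝ × Spc n)) (t : ℝ) : ℝ :=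
  sSup {r | ∃ x : Spc n, (t, x) ∈ Ω ∧ r = ‖φ (t, x)‖}

/-- The double cone `S` of the mass-removal argument. -/
def doubleCone (n : ℕ) : Set (ℝ × Spc n) :=
  {p | ∃ x : Spc n, (inner ℝ x (e1 n) : ℝ) ≥ ‖x‖ * Real.cos (π / 8) ∧ p = (-‖x‖, x)} ∪
  {p | ∃ x : Spc n, (inner ℝ x (e1 n) : ℝ) ≥ ‖x‖ * Real.cos (π / 8) ∧ p = (‖x‖, -x)}

namespace SchurAux

lemma cos_pi8_le : Real.cos (π/8) ≤ 1 := Real.cos_le_one _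

lemma cos_pi8_sq : 17/20 ≤ (Real.cos (π/8))^2 := by
  have h1 : Real.cos (π/8) ^ 2 = 1/2 + Real.cos (π/4) / 2 := by
    have := Real.cos_sq (π/8); rw [this]; ring_nf
  have h2 : Real.cos (π/4) = Real.sqrt 2 / 2 := Real.cos_pi_div_four
  have h3 : (1.41 : ℝ) ≤ Real.sqrt 2 := by
    have := Real.sq_sqrt (show (0:ℝ) ≤ 2 by norm_num)
    nlinarith [Real.sqrt_nonneg 2]
  nlinarith [h1, h2, h3]

lemma cos_pi8_ge : 9/10 ≤ Real.cos (π/8) := by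
  have h4 : 0 ≤ Real.cos (π/8) := by
    apply Real.cos_nonneg_of_mem_Icc
    constructor
    · nlinarith [Real.pi_pos]
    · nlinarith [Real.pi_pos]
  nlinarith [cos_pi8_sq, h4]

variable {E : Type*} [NormedAddCommGroup E] [InnerProductSpace ℝ E]

lemma ang (c : ℝ) (hc9 : 9/10 ≤ c) (hc1 : c ≤ 1) {u ω e : E}
    (hω : ‖ω‖ = 1) (he : ‖e‖ = 1)
    (hue : c * ‖u‖ ≤ ⟪u, e⟫) (hωe : c ≤ ⟪ω, e⟫) :
    (2*c^2 - 1) * ‖u‖ ≤ ⟪u, ω⟫ := by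
  set U := ‖u‖ with hU
  set A := (⟪u, e⟫ : ℝ) with hA
  set B := (⟪ω, e⟫ : ℝ) with hB
  have hU0 : 0 ≤ U := norm_nonneg u
  have hAU : A ≤ U := by
    have := real_inner_le_norm u e
    simpa [he] using this
  have hB1 : B ≤ 1 := by
    have := real_inner_le_norm ω e
    simpa [hω, he] using this
  have hA0 : 0 ≤ A := le_trans (mul_nonneg (by linarith) hU0) hue
  set u' := u - A • e with hu'
  set ω' := ω - B • e with hω'
  have hee : (⟪e, e⟫ : ℝ) = 1 := by
    rw [real_inner_self_eq_norm_mul_norm, he]; norm_num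
  have h1 : (⟪u', ω'⟫ : ℝ) = ⟪u, ω⟫ - A * B := by
    have hbe : (⟪e, ω⟫ : ℝ) = B := by rw [real_inner_comm]
    simp only [hu', hω', inner_sub_left, inner_sub_right, real_inner_smul_left,
      real_inner_smul_right, hee]
    rw [hbe, ← hA]
    ring
  have h2 : ‖u'‖^2 = U^2 - A^2 := by
    rw [hu', norm_sub_sq_real, real_inner_smul_right, norm_smul, ← hA, ← hU]
    simp [he, abs_mul_abs_self, sq_abs]
    ring
  have h3 : ‖ω'‖^2 = 1 - B^2 := by
    rw [hω', norm_sub_sq_real, real_inner_smul_right, norm_smul, ← hB, hω]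
    simp [he, sq_abs]
    ring
  have h4 : |(⟪u', ω'⟫ : ℝ)| ≤ ‖u'‖ * ‖ω'‖ := abs_real_inner_le_norm u' ω'
  set W := ‖u'‖ * ‖ω'‖ with hW
  have hW0 : 0 ≤ W := mul_nonneg (norm_nonneg _) (norm_nonneg _)
  have hW2 : W^2 = (U^2 - A^2) * (1 - B^2) := by
    rw [hW, mul_pow, h2, h3]
  set D := A * B - (2*c^2 - 1) * U with hD
  have hD0 : 0 ≤ D := by nlinarith
  have hfac1 : 0 ≤ (A - c*U) * (A + c*U - 2*(2*c^2-1)*B*U) := by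
    apply mul_nonneg
    · linarith
    · nlinarith
  have hfac2 : 0 ≤ U^2 * ((B - c) * (B + c - 2*(2*c^2-1)*c)) := by
    apply mul_nonneg (sq_nonneg U)
    apply mul_nonneg
    · linarith
    · nlinarith
  have hD2 : W^2 ≤ D^2 := by
    rw [hW2, hD]
    nlinarith [hfac1, hfac2]
  have hWD : W ≤ D := by
    calc W = Real.sqrt (W^2) := (Real.sqrt_sq hW0).symm
    _ ≤ Real.sqrt (D^2) := Real.sqrt_le_sqrt hD2
    _ = D := Real.sqrt_sq hD0
  have h5 : -W ≤ (⟪u', ω'⟫ : ℝ) := by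
    cases abs_le.mp h4 with
    | intro hl hr => linarith
  nlinarith [h1, h5, hWD]

lemma pl (c : ℝ) (hc9 : 9/10 ≤ c) (hc1 : c ≤ 1) (hc2 : 17/20 ≤ c^2) {ω e : E}
    (hω : ‖ω‖ = 1) (he : ‖e‖ = 1) (hωe : c ≤ ⟪ω, e⟫)
    {p₁ l T : ℝ} {p₂ : E}
    (hT : 0 ≤ T)
    (H1 : |p₁ + ‖p₂‖| ≤ l)
    (H2 : -(c * p₁) - ⟪p₂, e⟫ ≤ l - 2*c*T)
    (H3 : |(p₁ - T) + ‖p₂ - T • ω‖| ≤ l) :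
    T ≤ 8 * l := by
  by_contra hcon
  push_neg at hcon
  have hl0 : 0 ≤ l := le_trans (abs_nonneg _) H1
  have hT0 : 0 < T := lt_of_le_of_lt (by linarith) hcon
  set P := ‖p₂‖ with hP
  have hP0 : 0 ≤ P := norm_nonneg _
  have h5 : -p₁ ≥ P - l := by
    have := (abs_le.mp H1).2
    linarith
  have h6 : c * P + 2*c*T - 2*l ≤ ⟪p₂, e⟫ := by nlinarith
  have h7 : (⟪p₂, e⟫ : ℝ) ≤ P := by
    have := real_inner_le_norm p₂ e
    simpa [he] using this
  have h8 : 18*T - 20*l ≤ P := by nlinarith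
  have hPT : 15*T ≤ P := by nlinarith
  have hue : c * P ≤ ⟪p₂, e⟫ := by nlinarith
  have h9 : (2*c^2 - 1) * P ≤ ⟪p₂, ω⟫ := ang c hc9 hc1 hω he hue hωe
  have hk : (7:ℝ)/10 ≤ 2*c^2 - 1 := by nlinarith
  have hI : (7:ℝ)/10 * P ≤ ⟪p₂, ω⟫ := by nlinarith
  have h10 : T + P - 2*l ≤ ‖p₂ - T • ω‖ := by
    have := (abs_le.mp H3).1
    linarith
  have h11 : ‖p₂ - T • ω‖^2 = P^2 - 2*T*⟪p₂, ω⟫ + T^2 := by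
    rw [norm_sub_sq_real, real_inner_smul_right, norm_smul, hω]
    simp [abs_of_nonneg hT]
    ring
  have h12 : (T + P - 2*l)^2 ≤ P^2 - 2*T*⟪p₂, ω⟫ + T^2 := by
    rw [← h11]
    have hnn : 0 ≤ T + P - 2*l := by nlinarith
    nlinarith [norm_nonneg (p₂ - T • ω)]
  have hPpos : 0 < P := lt_of_lt_of_le (by nlinarith) hPT
  nlinarith [h12,
    mul_nonneg (by linarith : (0:ℝ) ≤ T - 8*l) hP0,
    mul_nonneg (by linarith : (0:ℝ) ≤ T - 8*l) hT,
    mul_nonneg (by linarith : (0:ℝ) ≤ P - 15*T) hT,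
    mul_nonneg (by linarith : (0:ℝ) ≤ ⟪p₂, ω⟫ - 7/10 * P) hT,
    mul_pos hT0 hPpos]

lemma kl (c : ℝ) (hc9 : 9/10 ≤ c) (hc1 : c ≤ 1) (hc2 : 17/20 ≤ c^2) {ω e : E}
    (hω : ‖ω‖ = 1) (he : ‖e‖ = 1) (hωe : c ≤ ⟪ω, e⟫) (a : ℝ) (z : E)
    {s s' l : ℝ} (hss : s ≤ s')
    (h1 : |(a - s) + ‖z - s • ω‖| ≤ l)
    (h2 : -(c*(a - s')) - ⟪z - s' • ω, e⟫ ≤ l)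
    (h3 : |(a - s') + ‖z - s' • ω‖| ≤ l) :
    s' - s ≤ 8 * l := by
  have hz : z - s' • ω = (z - s • ω) - (s' - s) • ω := by module
  have ha : a - s' = (a - s) - (s' - s) := by ring
  apply pl c hc9 hc1 hc2 hω he hωe (p₁ := a - s) (p₂ := z - s • ω) (T := s' - s)
    (l := l) (by linarith)
  · exact h1
  · have hexp : -(c*(a - s')) - ⟪z - s' • ω, e⟫
        = -(c*(a - s)) - ⟪z - s • ω, e⟫ + c*(s'-s) + (s'-s)*⟪ω, e⟫ := by
      rw [hz, ha, inner_sub_left, real_inner_smul_left]; ring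
    have hge : (s'-s)*c ≤ (s'-s)*⟪ω, e⟫ :=
      mul_le_mul_of_nonneg_left hωe (by linarith)
    rw [hexp] at h2
    linarith
  · rw [← ha, ← hz]; exact h3

lemma helper1 (A B : ℝ) : |A| ≤ Real.sqrt (A^2 + B^2) := by
  exact abs_le.mpr ⟨by nlinarith [Real.sqrt_nonneg (A^2+B^2), Real.sq_sqrt (by positivity : (0:ℝ) ≤ A^2+B^2), sq_nonneg (A + Real.sqrt (A^2+B^2)), sq_nonneg B],
    Real.le_sqrt_of_sq_le (by nlinarith [sq_nonneg B])⟩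

lemma helper2 (A B : ℝ) (hB : 0 ≤ B) : B ≤ Real.sqrt (A^2 + B^2) := by
  exact Real.le_sqrt_of_sq_le (by nlinarith [sq_nonneg A])

lemma core (c : ℝ) (hc9 : 9/10 ≤ c) (hc1 : c ≤ 1) (hc2 : 17/20 ≤ c^2) {ω e : E}
    (hω : ‖ω‖ = 1) (he : ‖e‖ = 1) (hωe : c ≤ ⟪ω, e⟫) (a : ℝ) (z : E) :
    ∃ r : ℝ, ∀ s : ℝ, ∀ x : E, ‖x‖ * c ≤ ⟪x, e⟫ →
      |s - r|/16 - 1/2 ≤ Real.sqrt ((a - s + ‖x‖)^2 + ‖z - s • ω - x‖^2) := by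
  set m : ℝ → ℝ := fun s => max |(a - s) + ‖z - s • ω‖| (-(c*(a - s)) - ⟪z - s • ω, e⟫)
    with hm
  have hm0 : ∀ s, 0 ≤ m s := fun s => le_trans (abs_nonneg _) (le_max_left _ _)
  have hKL2 : ∀ s s' : ℝ, |s - s'| ≤ 8 * max (m s) (m s') := by
    intro s s'
    rcases le_total s s' with h | h
    · rw [abs_of_nonpos (by linarith)]
      have := kl c hc9 hc1 hc2 hω he hωe a z h
        (le_trans (le_max_left _ _) (le_max_left (m s) (m s')))
        (le_trans (le_max_right _ _) (le_max_right (m s) (m s')))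
        (le_trans (le_max_left _ _) (le_max_right (m s) (m s')))
      linarith
    · rw [abs_of_nonneg (by linarith)]
      have := kl c hc9 hc1 hc2 hω he hωe a z h
        (le_trans (le_max_left _ _) (le_max_right (m s) (m s')))
        (le_trans (le_max_right _ _) (le_max_left (m s) (m s')))
        (le_trans (le_max_left _ _) (le_max_left (m s) (m s')))
      linarith
  have hbdd : BddBelow (Set.range m) := ⟨0, by rintro y ⟨s, rfl⟩; exact hm0 s⟩
  obtain ⟨r, hr⟩ : ∃ r, m r < (⨅ s, m s) + 1 :=
    exists_lt_of_ciInf_lt (lt_add_one _)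
  have hgrow : ∀ s, |s - r|/8 - 1 ≤ m s := by
    intro s
    have h1 : |s - r| ≤ 8 * max (m s) (m r) := hKL2 s r
    have h2 : m r ≤ m s + 1 := by
      have h3 : (⨅ s, m s) ≤ m s := ciInf_le hbdd s
      linarith
    have h4 : max (m s) (m r) ≤ m s + 1 := max_le (by linarith) h2
    linarith
  refine ⟨r, fun s x hx => ?_⟩
  set R := Real.sqrt ((a - s + ‖x‖)^2 + ‖z - s • ω - x‖^2) with hR
  have hA : |a - s + ‖x‖| ≤ R := by
    rw [hR]; exact helper1 _ _
  have hw : ‖z - s • ω - x‖ ≤ R := by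
    rw [hR]; exact helper2 _ _ (norm_nonneg _)
  have hφb : |(a - s) + ‖z - s • ω‖| ≤ 2 * R := by
    have e1 : (a - s) + ‖z - s • ω‖ = (a - s + ‖x‖) + (‖z - s • ω‖ - ‖x‖) := by ring
    have e2 : |‖z - s • ω‖ - ‖x‖| ≤ ‖z - s • ω - x‖ := abs_norm_sub_norm_le _ _
    calc |(a - s) + ‖z - s • ω‖| ≤ |a - s + ‖x‖| + |‖z - s • ω‖ - ‖x‖| := by
          rw [e1]; exact abs_add_le _ _
    _ ≤ R + R := add_le_add hA (le_trans e2 hw)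
    _ = 2 * R := by ring
  have hψb : -(c*(a - s)) - ⟪z - s • ω, e⟫ ≤ 2 * R := by
    have e3 : -(c*(a - s)) - ⟪z - s • ω, e⟫
        = (c*‖x‖ - ⟪x, e⟫) - c*(a - s + ‖x‖) - ⟪z - s • ω - x, e⟫ := by
      simp only [inner_sub_left]; ring
    have e4 : c*‖x‖ - ⟪x, e⟫ ≤ 0 := by nlinarith
    have e5 : -(c*(a - s + ‖x‖)) ≤ |a - s + ‖x‖| := by
      have h := neg_abs_le (a - s + ‖x‖)
      nlinarith [abs_nonneg (a - s + ‖x‖)]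
    have e6 : -(⟪z - s • ω - x, e⟫ : ℝ) ≤ ‖z - s • ω - x‖ := by
      have h := abs_real_inner_le_norm (z - s • ω - x) e
      rw [he, mul_one] at h
      have := (abs_le.mp h).1
      linarith
    rw [e3]
    linarith
  have hms : m s ≤ 2 * R := max_le hφb hψb
  have := hgrow s
  linarith

lemma pt1 (n : ℕ) (hn : 1 ≤ n) {d v : ℝ} (hd : 0 ≤ d) (hv : |v|/16 - 1/2 ≤ d) :
    (1 + d) ^ (-(50 * (n:ℝ))) ≤ 32^(50*n) * (1 + v^2)⁻¹ := by
  have hvn : 0 ≤ |v| := abs_nonneg v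
  have h32 : (1 + |v|)/32 ≤ 1 + d := by
    rcases le_total (1 + |v|) 32 with h | h
    · linarith
    · linarith
  have hb0 : (0:ℝ) < (1 + |v|)/32 := by linarith
  have hexp : (-(50 * (n:ℝ))) = -((50*n : ℕ) : ℝ) := by push_cast; ring
  rw [hexp, Real.rpow_neg (by linarith), Real.rpow_natCast]
  have hpow : ((1 + |v|)/32)^(50*n) ≤ (1 + d)^(50*n) :=
    pow_le_pow_left₀ (le_of_lt hb0) h32 _
  have hinv : ((1 + d)^(50*n))⁻¹ ≤ (((1 + |v|)/32)^(50*n))⁻¹ :=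
    inv_anti₀ (pow_pos hb0 _) hpow
  apply le_trans hinv
  rw [div_pow, inv_div]
  have hq : (1 + v^2) ≤ (1 + |v|)^(50*n) := by
    have h2 : (1 + |v|)^2 ≤ (1 + |v|)^(50*n) :=
      pow_le_pow_right₀ (by linarith) (by omega)
    nlinarith [sq_abs v]
  rw [div_le_iff₀ (by positivity), mul_assoc]
  have h1 : (1:ℝ) ≤ (1 + v^2)⁻¹ * (1 + |v|)^(50*n) := by
    rw [inv_mul_eq_div, le_div_iff₀ (by positivity)]
    linarith
  nlinarith [pow_pos (show (0:ℝ) < 32 by norm_num) (50*n), h1]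

lemma int_integrable (r : ℝ) : MeasureTheory.Integrable (fun s : ℝ => (1 + (s - r)^2)⁻¹) :=
  integrable_inv_one_add_sq.comp_sub_right r

lemma int_value (r : ℝ) : (∫ s : ℝ, (1 + (s - r)^2)⁻¹) = π := by
  rw [show (fun s : ℝ => (1 + (s - r)^2)⁻¹) = (fun u : ℝ => (1 + u^2)⁻¹) ∘ (fun s => s - r)
    from rfl]
  rw [← integral_univ_inv_one_add_sq]
  exact MeasureTheory.integral_sub_right_eq_self (fun u : ℝ => (1 + u^2)⁻¹) r

end SchurAux


namespace SchurAux

lemma e1_norm (n : ℕ) (hn : 2 ≤ n) : ‖e1 n‖ = 1 := by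
  haveI : NeZero n := ⟨by omega⟩
  have h : e1 n = EuclideanSpace.single (0 : Fin n) (1:ℝ) := by
    ext i
    by_cases hi : i = 0
    · simp [hi, e1]
    · have : (i : ℕ) ≠ 0 := by
        intro h; exact hi (Fin.ext (by rw [h]; simp))
      simp [hi, this, e1]
  rw [h, EuclideanSpace.norm_single]
  norm_num

lemma cone_zero (n : ℕ) : ((0:ℝ), (0 : Spc n)) ∈ doubleCone n := by
  left
  refine ⟨0, by simp, ?_⟩
  simp

lemma line_int (n : ℕ) (hn : 2 ≤ n) (ω : Spc n) (hdir : IsDir n ω) (a : ℝ) (z : Spc n) :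
    (∫ s : ℝ, (1 + distToSet n (a - s, z - s • ω) (doubleCone n)) ^ (-(50 * (n:ℝ))))
      ≤ 2 * π * 32^(50*n) := by
  obtain ⟨hω1, hω2⟩ := hdir
  have hc9 := cos_pi8_ge
  have hc1 := cos_pi8_le
  have hc2 := cos_pi8_sq
  have he := e1_norm n hn
  obtain ⟨r₁, hr₁⟩ := core (Real.cos (π/8)) hc9 hc1 hc2 hω1 he hω2 a z
  obtain ⟨r₂, hr₂⟩ := core (Real.cos (π/8)) hc9 hc1 hc2 hω1 he hω2 (-a) (-z)
  haveI hne : Nonempty ↥(doubleCone n) := ⟨⟨((0:ℝ), (0 : Spc n)), cone_zero n⟩⟩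
  have hd0 : ∀ s : ℝ, 0 ≤ distToSet n (a - s, z - s • ω) (doubleCone n) := fun s =>
    le_ciInf fun q => Real.sqrt_nonneg _
  have hdlow : ∀ s : ℝ, min (|s - r₁|/16 - 1/2) (|s - (-r₂)|/16 - 1/2)
      ≤ distToSet n (a - s, z - s • ω) (doubleCone n) := by
    intro s
    apply le_ciInf
    rintro ⟨q, hq | hq⟩
    · obtain ⟨x, hx, rfl⟩ := hq
      refine le_trans (min_le_left _ _) ?_
      have h := hr₁ s x hx
      simpa [edist1n, sub_neg_eq_add] using h
    · obtain ⟨x, hx, rfl⟩ := hq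
      refine le_trans (min_le_right _ _) ?_
      have h := hr₂ (-s) x hx
      have habs : -s - r₂ = -(s - (-r₂)) := by ring
      rw [habs, abs_neg] at h
      have harg : (-a - -s + ‖x‖)^2 + ‖-z - (-s) • ω - x‖^2
          = ((a - s) - ‖x‖)^2 + ‖(z - s • ω) - (-x)‖^2 := by
        have h1 : -z - (-s) • ω - x = -((z - s • ω) - (-x)) := by module
        rw [h1, norm_neg]; ring
      rw [harg] at h
      simpa [edist1n] using h
  have hpt : ∀ s : ℝ,
      (1 + distToSet n (a - s, z - s • ω) (doubleCone n)) ^ (-(50 * (n:ℝ)))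
      ≤ 32^(50*n) * (1 + (s - r₁)^2)⁻¹ + 32^(50*n) * (1 + (s - (-r₂))^2)⁻¹ := by
    intro s
    rcases le_total (|s - r₁|/16 - 1/2) (|s - (-r₂)|/16 - 1/2) with h | h
    · have h1 : |s - r₁|/16 - 1/2 ≤ distToSet n (a - s, z - s • ω) (doubleCone n) :=
        le_trans (le_min le_rfl h) (hdlow s)
      have h2 := pt1 n (by omega) (hd0 s) h1
      have h3 : (0:ℝ) ≤ 32^(50*n) * (1 + (s - (-r₂))^2)⁻¹ := by positivity
      linarith
    · have h1 : |s - (-r₂)|/16 - 1/2 ≤ distToSet n (a - s, z - s • ω) (doubleCone n) :=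
        le_trans (le_min h le_rfl) (hdlow s)
      have h2 := pt1 n (by omega) (hd0 s) h1
      have h3 : (0:ℝ) ≤ 32^(50*n) * (1 + (s - r₁)^2)⁻¹ := by positivity
      linarith
  have hint1 : MeasureTheory.Integrable
      (fun s : ℝ => (32:ℝ)^(50*n) * (1 + (s - r₁)^2)⁻¹) :=
    (int_integrable r₁).const_mul _
  have hint2 : MeasureTheory.Integrable
      (fun s : ℝ => (32:ℝ)^(50*n) * (1 + (s - (-r₂))^2)⁻¹) :=
    (int_integrable (-r₂)).const_mul _
  have hle := MeasureTheory.integral_mono_of_nonneg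
    (f := fun s : ℝ => (1 + distToSet n (a - s, z - s • ω) (doubleCone n)) ^ (-(50 * (n:ℝ))))
    (g := fun s : ℝ => (32:ℝ)^(50*n) * (1 + (s - r₁)^2)⁻¹
      + (32:ℝ)^(50*n) * (1 + (s - (-r₂))^2)⁻¹)
    (Filter.Eventually.of_forall fun s => Real.rpow_nonneg (by linarith [hd0 s]) _)
    (hint1.add hint2)
    (Filter.Eventually.of_forall hpt)
  apply le_trans hle
  rw [MeasureTheory.integral_add hint1 hint2,
    MeasureTheory.integral_const_mul, MeasureTheory.integral_const_mul,
    int_value, int_value]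
  ring_nf
  nlinarith [pow_pos (show (0:ℝ) < 32 by norm_num) (50*n), Real.pi_pos]

end SchurAux


/-- The Schur-test transversality bounds at the end of the mass-removal proposition. -/
theorem schur_transversality (n : ℕ) (hn : 2 ≤ n) :
    ∃ C : ℝ, 0 < C ∧ ∀ (ω₀ ω₁ x₁ : Spc n), IsDir n ω₀ → IsDir n ω₁ →
      (∀ t : ℝ, (∫ t' : ℝ,
          (1 + distToSet n (t - t', x₁ + t • ω₁ - t' • ω₀) (doubleCone n))
            ^ (-(50 * (n : ℝ)))) ≤ C) ∧
      (∀ t' : ℝ, (∫ t : ℝ,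
          (1 + distToSet n (t - t', x₁ + t • ω₁ - t' • ω₀) (doubleCone n))
            ^ (-(50 * (n : ℝ)))) ≤ C) := by
  refine ⟨2 * π * 32^(50*n), by positivity, fun ω₀ ω₁ x₁ h₀ h₁ => ⟨fun t => ?_, fun t' => ?_⟩⟩
  · exact SchurAux.line_int n hn ω₀ h₀ t (x₁ + t • ω₁)
  · have key := SchurAux.line_int n hn ω₁ h₁ (-t') (x₁ - t' • ω₀)
    have hFG : ∀ t : ℝ, ((t - t' : ℝ), x₁ + t • ω₁ - t' • ω₀)
        = ((-t' - -t : ℝ), (x₁ - t' • ω₀) - (-t) • ω₁) := by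
      intro t
      refine Prod.ext ?_ ?_
      · ring
      · module
    calc (∫ t : ℝ, (1 + distToSet n (t - t', x₁ + t • ω₁ - t' • ω₀) (doubleCone n))
            ^ (-(50 * (n : ℝ))))
        = ∫ t : ℝ, (1 + distToSet n (-t' - -t, (x₁ - t' • ω₀) - (-t) • ω₁) (doubleCone n))
            ^ (-(50 * (n : ℝ))) := by
          congr 1; funext t; rw [hFG t]
      _ = ∫ s : ℝ, (1 + distToSet n (-t' - s, (x₁ - t' • ω₀) - s • ω₁) (doubleCone n))
            ^ (-(50 * (n : ℝ))) := by
          exact MeasureTheory.integral_neg_eq_self (fun s : ℝ => (1 + distToSet n (-t' - s, (x₁ - t' • ω₀) - s • ω₁) (doubleCone n)) ^ (-(50 * (n : ℝ)))) (volume : MeasureTheory.Measure ℝ)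
      _ ≤ 2 * π * 32^(50*n) := key

end
end

section
/- There is a constant c > 0 depending only on n with the following property. For every integer k ≥ 0, every t₀ ∈ ℝ, x₀ ∈ ℝⁿ, and every unit vector ω ∈ ℝⁿ with ω·e₁ ≥ cos(π/8), there exists a blue wave ψ of frequency 2^k with M(ψ) = 1 such that for every t with |t − t₀| ≤ 2^k one has ∫_{{x ∈ ℝⁿ : |x − x₀ − ω(t − t₀)| ≤ 1}} |ψ(t,x)|² dx ≥ c. (That is, a blue wave of frequency 2^k can concentrate its mass on the 1 × 2^k tube T_{t₀,x₀,ω,k}.) -/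
open MeasureTheory Real Set
open scoped RealInnerProductSpace

noncomputable section

lemma normDiff {n : ℕ} (a ζ : Spc n) (ha : a ≠ 0) :
    |‖a+ζ‖ - ‖a‖ - ⟪a,ζ⟫/‖a‖| ≤ ‖ζ‖^2/(2*‖a‖) := by
  have hc : (0:ℝ) < ‖a‖ := norm_pos_iff.mpr ha
  set u : ℝ := ⟪a,ζ⟫ with hu
  have hb2 : ‖a+ζ‖^2 = ‖a‖^2 + 2*u + ‖ζ‖^2 := norm_add_sq_real a ζ
  have hbc : |‖a+ζ‖ - ‖a‖| ≤ ‖ζ‖ := by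
    have := abs_norm_sub_norm_le (a+ζ) a
    simpa using this
  have h1 : (‖a+ζ‖-‖a‖)^2 ≤ ‖ζ‖^2 := by
    rw [← sq_abs]; exact pow_le_pow_left₀ (abs_nonneg _) hbc 2
  have key2 : (‖a+ζ‖ - ‖a‖)*‖a‖ - u = (‖ζ‖^2 - (‖a+ζ‖-‖a‖)^2)/2 := by
    linear_combination hb2/2
  have key : ‖a+ζ‖ - ‖a‖ - u/‖a‖ = ((‖a+ζ‖ - ‖a‖)*‖a‖ - u)/‖a‖ := by
    field_simp
  rw [key, abs_div, abs_of_pos hc, ← div_div]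
  have hgoal : |(‖a+ζ‖ - ‖a‖)*‖a‖ - u| ≤ ‖ζ‖^2/2 := by
    rw [key2, abs_le]
    have hw : 0 ≤ (‖a+ζ‖-‖a‖)^2 := sq_nonneg _
    constructor
    · linarith
    · linarith
  gcongr

lemma e1_eq {n : ℕ} (hn : 0 < n) : e1 n = EuclideanSpace.single (⟨0, hn⟩ : Fin n) (1:ℝ) := by
  ext i
  simp [e1, EuclideanSpace.single_apply, EuclideanSpace.equiv, Fin.ext_iff]

lemma norm_e1 {n : ℕ} (hn : 0 < n) : ‖e1 n‖ = 1 := by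
  rw [e1_eq hn, EuclideanSpace.norm_single]; norm_num

lemma cos8_le : Real.cos (π/8) ≤ 14/15 := by
  rw [Real.cos_pi_div_eight, div_le_iff₀ (by norm_num)]
  have h2 : Real.sqrt 2 ≤ 1.48 := by
    rw [show (1.48:ℝ) = Real.sqrt (1.48^2) by rw [Real.sqrt_sq]; norm_num]
    exact Real.sqrt_le_sqrt (by norm_num)
  calc Real.sqrt (2 + Real.sqrt 2) ≤ Real.sqrt (2+1.48) := Real.sqrt_le_sqrt (by linarith)
    _ ≤ 14/15*2 := by
        rw [show (14/15*2:ℝ) = Real.sqrt ((14/15*2)^2) by rw [Real.sqrt_sq]; norm_num]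
        exact Real.sqrt_le_sqrt (by norm_num)

lemma norm_exp_2piI (x : ℝ) : ‖Complex.exp (2*π*Complex.I*(x:ℂ))‖ = 1 := by
  rw [Complex.norm_exp]
  have : (2*π*Complex.I*(x:ℂ)).re = 0 := by simp [Complex.mul_re]
  rw [this, Real.exp_zero]

lemma cos8_pos : 0 < Real.cos (π/8) := by
  apply Real.cos_pos_of_mem_Ioo
  constructor <;> linarith [Real.pi_pos]

set_option maxHeartbeats 2000000 in
/-- A blue wave of frequency `2^k` and unit mass can concentrate on a `1 × 2^k` tube. -/
theorem blue_wave_concentrates_on_tube (n : ℕ) (hn : 2 ≤ n) :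
    ∃ c : ℝ, 0 < c ∧ ∀ (k : ℕ) (t₀ : ℝ) (x₀ ω : Spc n), IsDir n ω →
      ∃ gm : Spc n → ℂ, IsBlueData n k gm ∧ mass n 0 gm = 1 ∧
        ∀ t : ℝ, |t - t₀| ≤ 2 ^ k →
          c ≤ ∫ x in {x : Spc n | ‖x - x₀ - (t - t₀) • ω‖ ≤ 1}, ‖wave n 0 gm (t, x)‖ ^ 2 := by
  have hn0 : 0 < n := by omega
  set δ : ℝ := 1/100 with hδ
  set V : ℝ := (volume (Metric.closedBall (0:Spc n) δ)).toReal with hVdef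
  have hV0 : 0 < V := by
    apply ENNReal.toReal_pos
    · exact (Metric.measure_closedBall_pos volume 0 (by norm_num)).ne'
    · exact measure_closedBall_lt_top.ne
  set Vb : ℝ := (volume (Metric.closedBall (0:Spc n) 1)).toReal with hVbdef
  have hVb0 : 0 < Vb := by
    apply ENNReal.toReal_pos
    · exact (Metric.measure_closedBall_pos volume 0 (by norm_num)).ne'
    · exact measure_closedBall_lt_top.ne
  refine ⟨V/4 * Vb, by positivity, ?_⟩
  intro k t₀ x₀ ω hω
  obtain ⟨hω1, hω2⟩ := hω
  have hq0 : 0 < Real.cos (π/8) := cos8_pos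
  have hq1 : Real.cos (π/8) ≤ 14/15 := cos8_le
  set q : ℝ := Real.cos (π/8) with hqdef
  have h2k : (1:ℝ) ≤ 2^k := one_le_pow₀ (by norm_num)
  have h2kpos : (0:ℝ) < 2^k := by linarith
  set ε : ℝ := (2/5) / 2^k with hεdef
  have hε0 : 0 < ε := by positivity
  have hε1 : ε ≤ 2/5 := by
    rw [hεdef, div_le_iff₀ h2kpos]; linarith
  have hε2k : ε * 2^k = 2/5 := by rw [hεdef]; field_simp
  set v : Spc n := ω + ε • e1 n with hvdef
  have hNe : |‖v‖ - 1| ≤ ε := by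
    have h1 : ‖v - ω‖ = ε := by
      rw [hvdef]; simp [norm_smul, norm_e1 hn0, abs_of_pos hε0]
    have := abs_norm_sub_norm_le v ω
    rw [h1, hω1] at this; exact this
  have hN1 : ‖v‖ ≤ 1 + ε := by cases abs_le.mp hNe; linarith
  have hN2 : 1 - ε ≤ ‖v‖ := by cases abs_le.mp hNe; linarith
  have hNpos : 0 < ‖v‖ := by linarith
  set ω' : Spc n := ‖v‖⁻¹ • v with hω'def
  have hω'1 : ‖ω'‖ = 1 := by
    rw [hω'def, norm_smul, Real.norm_eq_abs, abs_of_pos (by positivity : (0:ℝ) < ‖v‖⁻¹), inv_mul_cancel₀ hNpos.ne']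
  have hω'ω : ‖ω' - ω‖ ≤ 2*ε := by
    have h1 : ‖ω' - v‖ = |1 - ‖v‖| := by
      rw [hω'def, show ‖v‖⁻¹ • v - v = (‖v‖⁻¹ - 1) • v by rw [sub_smul, one_smul],
        norm_smul, Real.norm_eq_abs]
      rw [show |‖v‖⁻¹ - 1| * ‖v‖ = |(‖v‖⁻¹ - 1) * ‖v‖| by rw [abs_mul, abs_of_pos hNpos]]
      congr 1
      field_simp
    have h2 : ‖v - ω‖ = ε := by
      rw [hvdef]; simp [norm_smul, norm_e1 hn0, abs_of_pos hε0]
    calc ‖ω' - ω‖ ≤ ‖ω' - v‖ + ‖v - ω‖ := norm_sub_le_norm_sub_add_norm_sub _ _ _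
      _ ≤ ε + ε := by
          rw [h1, h2, abs_sub_comm]
          have := hNe; linarith [le_abs_self (‖v‖-1), abs_nonneg (‖v‖-1)]
      _ = 2*ε := by ring
  set r : ℝ := (3/2) * 2^k with hrdef
  have hrpos : 0 < r := by positivity
  set ξ₀ : Spc n := r • ω' with hξ₀def
  have hξ₀norm : ‖ξ₀‖ = r := by
    rw [hξ₀def, norm_smul, hω'1, Real.norm_eq_abs, abs_of_pos hrpos, mul_one]
  have hξ₀ne : ξ₀ ≠ 0 := by
    intro h; rw [h, norm_zero] at hξ₀norm; linarith
  -- inner products with e1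
  have he1self : ⟪e1 n, e1 n⟫ = (1:ℝ) := by
    rw [real_inner_self_eq_norm_sq, norm_e1 hn0]; norm_num
  have hωe1 : ⟪ω, e1 n⟫ ≥ q := hω2
  have hω'e1 : ⟪ω', e1 n⟫ = ‖v‖⁻¹ * (⟪ω, e1 n⟫ + ε) := by
    rw [hω'def, real_inner_smul_left, hvdef, inner_add_left, real_inner_smul_left, he1self,
      mul_one]
  -- ball inside blueSet
  set B : Set (Spc n) := Metric.closedBall ξ₀ δ with hBdef
  have hBmeas : MeasurableSet B := measurableSet_closedBall
  have hBcomp : IsCompact B := isCompact_closedBall _ _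
  have hrε : r * ε = 3/5 := by
    rw [hrdef, mul_assoc, mul_comm ((2:ℝ)^k) ε, hε2k]; norm_num
  have hq1' : q ≤ 1 := Real.cos_le_one _
  have hc1 : ⟪ω, e1 n⟫ ≤ 1 := by
    have := real_inner_le_norm ω (e1 n)
    rwa [hω1, norm_e1 hn0, one_mul] at this
  have hξ₀e1 : ⟪ξ₀, e1 n⟫ = r * (‖v‖⁻¹ * (⟪ω, e1 n⟫ + ε)) := by
    rw [hξ₀def, real_inner_smul_left, hω'e1]
  have hkey : r * q + 2*δ ≤ ⟪ξ₀, e1 n⟫ := by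
    rw [hξ₀e1]
    rw [show r * (‖v‖⁻¹ * (⟪ω, e1 n⟫ + ε)) = r * (⟪ω, e1 n⟫ + ε) / ‖v‖ by ring]
    rw [le_div_iff₀ hNpos]
    have h1 : (r*q + 2*δ) * ‖v‖ ≤ (r*q + 2*δ) * (1+ε) :=
      mul_le_mul_of_nonneg_left hN1 (by positivity)
    have h3 : r*ε*q ≤ (3/5) * (14/15) := by
      rw [hrε]
      linarith
    have h2 : (r*q + 2*δ)*(1+ε) = r*q + r*ε*q + 2*δ + 2*δ*ε := by ring
    have h4 : 2*δ*ε ≤ 2*(1/100)*(2/5) := by rw [hδ]; linarith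
    have h5 : r * (⟪ω, e1 n⟫ + ε) = r*⟪ω, e1 n⟫ + r*ε := by ring
    have h6 : r*q ≤ r*⟪ω, e1 n⟫ := mul_le_mul_of_nonneg_left hωe1 hrpos.le
    rw [h5, hrε]
    rw [hδ] at h1 h2 ⊢
    linarith
  have hBsub : B ⊆ blueSet n k := by
    intro ξ hξ
    have hζ : ‖ξ - ξ₀‖ ≤ δ := by
      rwa [hBdef, Metric.mem_closedBall, dist_eq_norm] at hξ
    have hnb : |‖ξ‖ - r| ≤ δ := by
      have := abs_norm_sub_norm_le ξ ξ₀
      rw [hξ₀norm] at this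
      exact this.trans hζ
    have hnb1 : r - δ ≤ ‖ξ‖ := by cases abs_le.mp hnb; linarith
    have hnb2 : ‖ξ‖ ≤ r + δ := by cases abs_le.mp hnb; linarith
    refine ⟨?_, ?_, ?_⟩
    · rw [hrdef] at hnb1; rw [hδ] at hnb1; linarith
    · rw [pow_succ]
      rw [hrdef] at hnb2; rw [hδ] at hnb2; linarith
    · show ⟪ξ, e1 n⟫ ≥ ‖ξ‖ * q
      have hsplit : ⟪ξ, e1 n⟫ = ⟪ξ₀, e1 n⟫ + ⟪ξ - ξ₀, e1 n⟫ := by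
        rw [← inner_add_left]; norm_num
      have hζe1 : |⟪ξ - ξ₀, e1 n⟫| ≤ δ := by
        have := abs_real_inner_le_norm (ξ - ξ₀) (e1 n)
        rw [norm_e1 hn0, mul_one] at this
        exact this.trans hζ
      have h5 : -δ ≤ ⟪ξ - ξ₀, e1 n⟫ := by cases abs_le.mp hζe1; linarith
      rw [hsplit]
      have h6 : ‖ξ‖*q ≤ (r+δ)*q := mul_le_mul_of_nonneg_right hnb2 hq0.le
      have h7 : (r+δ)*q = r*q + δ*q := by ring
      have h8 : δ*q ≤ δ := by
        rw [hδ]; linarith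
      linarith
  have hVB : (volume B).toReal = V := by
    rw [hBdef, Measure.addHaar_closedBall_center]
  have hVBne : volume B ≠ ⊤ := measure_closedBall_lt_top.ne
  -- the data
  set A : ℝ := (Real.sqrt V)⁻¹ with hAdef
  have hsV : 0 < Real.sqrt V := Real.sqrt_pos.mpr hV0
  have hA0 : 0 < A := by positivity
  set g : Spc n → ℂ := fun ξ => (A:ℂ) * Complex.exp (2*π*Complex.I*((t₀*‖ξ‖ - ⟪x₀, ξ⟫ : ℝ):ℂ))
    with hgdef
  have hgcont : Continuous g := by
    apply continuous_const.mul
    apply Complex.continuous_exp.comp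
    apply continuous_const.mul
    apply Complex.continuous_ofReal.comp
    exact (continuous_const.mul (continuous_norm)).sub
      (Continuous.inner continuous_const continuous_id)
  have hgnorm : ∀ ξ, ‖g ξ‖ = A := by
    intro ξ
    rw [hgdef]
    simp only [norm_mul, Complex.norm_real, Real.norm_eq_abs, abs_of_pos hA0]
    rw [Complex.norm_exp]
    have : (2*π*Complex.I*((t₀*‖ξ‖ - ⟪x₀, ξ⟫ : ℝ):ℂ)).re = 0 := by
      simp [Complex.mul_re]
    rw [this, Real.exp_zero, mul_one]
  set gm : Spc n → ℂ := B.indicator g with hgmdef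
  have hgmint : Integrable gm :=
    (hgcont.continuousOn.integrableOn_compact hBcomp).integrable_indicator hBmeas
  have hgm2 : (fun ξ => ‖gm ξ‖^2) = B.indicator (fun _ => A^2) := by
    funext ξ
    by_cases h : ξ ∈ B
    · simp [hgmdef, Set.indicator_of_mem h, hgnorm ξ]
    · simp [hgmdef, Set.indicator_of_mem, Set.indicator_of_notMem h]
  have hgm2int : Integrable (fun ξ => ‖gm ξ‖^2) := by
    rw [hgm2]
    exact (continuous_const.continuousOn.integrableOn_compact hBcomp).integrable_indicator hBmeas
  have hA2 : A^2 = V⁻¹ := by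
    rw [hAdef, inv_pow, Real.sq_sqrt hV0.le]
  have hmass : mass n 0 gm = 1 := by
    rw [mass]
    simp only [Pi.zero_apply, norm_zero]
    rw [hgm2, integral_indicator hBmeas, setIntegral_const, measureReal_def, hVB, smul_eq_mul, hA2]
    simp [mul_inv_cancel₀ hV0.ne']
  refine ⟨gm, ⟨hgmint, ?_, ?_⟩, hmass, ?_⟩
  · rw [memLp_two_iff_integrable_sq_norm hgmint.aestronglyMeasurable]
    exact hgm2int
  · intro ξ hξ
    exact Set.indicator_of_notMem (fun hB => hξ (hBsub hB)) g
  -- main estimate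
  intro t ht
  set s : ℝ := t - t₀ with hsdef
  set S : Set (Spc n) := {x : Spc n | ‖x - x₀ - s • ω‖ ≤ 1} with hSdef
  have hSball : S = Metric.closedBall (x₀ + s • ω) 1 := by
    ext x
    simp only [hSdef, Set.mem_setOf_eq, Metric.mem_closedBall, dist_eq_norm, sub_sub]
  have hwave0 : ∀ p : ℝ × Spc n, wave n 0 gm p =
      ∫ ξ : Spc n, gm ξ * Complex.exp (2*π*Complex.I*((-(p.1*‖ξ‖) + ⟪p.2, ξ⟫ : ℝ):ℂ)) := by
    intro p
    rw [wave]
    simp only [Pi.zero_apply, zero_mul, integral_zero, zero_add]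
  have hintF : ∀ (c : ℝ) (z : Spc n),
      Integrable (fun ξ : Spc n => gm ξ * Complex.exp (2*π*Complex.I*((-(c*‖ξ‖) + ⟪z, ξ⟫ : ℝ):ℂ))) := by
    intro c z
    have hE : Continuous fun ξ : Spc n =>
        Complex.exp (2*π*Complex.I*((-(c*‖ξ‖) + ⟪z, ξ⟫ : ℝ):ℂ)) := by
      apply Complex.continuous_exp.comp
      apply continuous_const.mul
      apply Complex.continuous_ofReal.comp
      exact ((continuous_const.mul continuous_norm).neg).add
        (Continuous.inner continuous_const continuous_id)
    have h := Integrable.bdd_mul (c := 1) hgmint hE.aestronglyMeasurable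
      (Filter.Eventually.of_forall fun ξ => le_of_eq (norm_exp_2piI _))
    simpa [mul_comm] using h
  have hWlow : ∀ x ∈ S, Real.sqrt V / 2 ≤ ‖wave n 0 gm (t, x)‖ := by
    intro x hx
    have hy1 : ‖x - x₀ - s • ω‖ ≤ 1 := hx
    set Θ : Spc n → ℝ := fun ξ => -(s*‖ξ‖) + ⟪x - x₀, ξ⟫ with hΘdef
    have hphase : ∀ ξ ∈ B, |Θ ξ - Θ ξ₀| ≤ 1/50 := by
      intro ξ hmem
      set ζ : Spc n := ξ - ξ₀ with hζdef
      have hζ : ‖ζ‖ ≤ δ := by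
        rwa [hBdef, Metric.mem_closedBall, dist_eq_norm] at hmem
      have hξeq : ξ = ξ₀ + ζ := by rw [hζdef]; abel
      set y : Spc n := x - x₀ - s • ω with hydef
      have hxx0 : x - x₀ = s • ω + y := by rw [hydef]; abel
      have hΔ : Θ ξ - Θ ξ₀ = -(s*(‖ξ‖ - ‖ξ₀‖ - ⟪ω,ζ⟫)) + ⟪y,ζ⟫ := by
        simp only [hΘdef]
        have h1 : ⟪x - x₀, ξ⟫ - ⟪x - x₀, ξ₀⟫ = ⟪x - x₀, ζ⟫ := by
          rw [hζdef, inner_sub_right]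
        have h2 : ⟪x - x₀, ζ⟫ = s * ⟪ω, ζ⟫ + ⟪y, ζ⟫ := by
          rw [hxx0, inner_add_left, real_inner_smul_left]
        linear_combination h1 + h2
      have hin : ⟪ξ₀,ζ⟫/‖ξ₀‖ = ⟪ω',ζ⟫ := by
        rw [hξ₀norm, hξ₀def, real_inner_smul_left]
        exact mul_div_cancel_left₀ _ hrpos.ne'
      have h5 : |‖ξ‖ - ‖ξ₀‖ - ⟪ω',ζ⟫| ≤ δ^2/(2*r) := by
        have hD := normDiff ξ₀ ζ hξ₀ne
        rw [hin, ← hξeq] at hD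
        refine hD.trans ?_
        rw [hξ₀norm]
        gcongr
      have h4 : |⟪ω'-ω,ζ⟫| ≤ 2*ε*δ := by
        refine (abs_real_inner_le_norm _ _).trans ?_
        exact mul_le_mul hω'ω hζ (norm_nonneg _) (by positivity)
      have hE : |‖ξ‖ - ‖ξ₀‖ - ⟪ω,ζ⟫| ≤ δ^2/(2*r) + 2*ε*δ := by
        have h3 : ‖ξ‖ - ‖ξ₀‖ - ⟪ω,ζ⟫ = (‖ξ‖ - ‖ξ₀‖ - ⟪ω',ζ⟫) + ⟪ω'-ω,ζ⟫ := by
          rw [inner_sub_left]; ring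
        rw [h3]
        exact (abs_add_le _ _).trans (add_le_add h5 h4)
      have hyζ : |⟪y,ζ⟫| ≤ δ := by
        refine (abs_real_inner_le_norm _ _).trans ?_
        calc ‖y‖ * ‖ζ‖ ≤ 1 * δ := mul_le_mul hy1 hζ (norm_nonneg _) zero_le_one
          _ = δ := one_mul δ
      have hsE : |s * (‖ξ‖ - ‖ξ₀‖ - ⟪ω,ζ⟫)| ≤ 2^k * (δ^2/(2*r) + 2*ε*δ) := by
        rw [abs_mul]
        exact mul_le_mul ht hE (abs_nonneg _) (by positivity)
      have hnum : (2:ℝ)^k * (δ^2/(2*r) + 2*ε*δ) = δ^2/3 + 2*δ*(ε*2^k) := by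
        rw [hrdef]; field_simp
      rw [hΔ]
      calc |(-(s*(‖ξ‖ - ‖ξ₀‖ - ⟪ω,ζ⟫))) + ⟪y,ζ⟫|
          ≤ |(-(s*(‖ξ‖ - ‖ξ₀‖ - ⟪ω,ζ⟫)))| + |⟪y,ζ⟫| := abs_add_le _ _
        _ = |s*(‖ξ‖ - ‖ξ₀‖ - ⟪ω,ζ⟫)| + |⟪y,ζ⟫| := by rw [abs_neg]
        _ ≤ 2^k * (δ^2/(2*r) + 2*ε*δ) + δ := add_le_add hsE hyζ
        _ = δ^2/3 + 2*δ*(ε*2^k) + δ := by rw [hnum]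
        _ ≤ 1/50 := by rw [hε2k, hδ]; norm_num
    -- the integrand identity
    set h : Spc n → ℂ := fun ξ => (A:ℂ) * Complex.exp (2*π*Complex.I*((Θ ξ : ℝ):ℂ)) with hhdef
    have hcomb : (fun ξ : Spc n => gm ξ *
        Complex.exp (2*π*Complex.I*((-(t*‖ξ‖) + ⟪x, ξ⟫ : ℝ):ℂ))) = B.indicator h := by
      funext ξ
      by_cases hmem : ξ ∈ B
      · rw [hgmdef, Set.indicator_of_mem hmem, Set.indicator_of_mem hmem, hgdef, hhdef]
        simp only []
        rw [mul_assoc, ← Complex.exp_add]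
        congr 1
        rw [← mul_add, ← Complex.ofReal_add]
        congr 2
        simp only [hΘdef]
        rw [inner_sub_left, hsdef]
        ring
      · rw [hgmdef, Set.indicator_of_notMem hmem, Set.indicator_of_notMem hmem, zero_mul]
    have hwx : wave n 0 gm (t, x) = ∫ ξ in B, h ξ := by
      rw [hwave0 (t, x)]
      simp only []
      rw [hcomb, integral_indicator hBmeas]
    have hhcont : Continuous h := by
      apply continuous_const.mul
      apply Complex.continuous_exp.comp
      apply continuous_const.mul
      apply Complex.continuous_ofReal.comp
      simp only [hΘdef]
      exact ((continuous_const.mul continuous_norm).neg).add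
        (Continuous.inner continuous_const continuous_id)
    have hIntB : IntegrableOn h B := hhcont.continuousOn.integrableOn_compact hBcomp
    set u : ℂ := Complex.exp (2*π*Complex.I*((-(Θ ξ₀) : ℝ):ℂ)) with hudef
    have hunorm : ‖u‖ = 1 := norm_exp_2piI _
    have hptwise : ∀ ξ ∈ B, A/2 ≤ (u * h ξ).re := by
      intro ξ hmem
      have heq : u * h ξ = (A:ℂ) * Complex.exp (((2*π*(Θ ξ - Θ ξ₀):ℝ):ℂ) * Complex.I) := by
        rw [hudef, hhdef]
        simp only []
        rw [mul_comm u, mul_assoc, ← Complex.exp_add]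
        congr 2
        push_cast
        ring
      rw [heq, Complex.re_ofReal_mul, Complex.exp_ofReal_mul_I_re]
      have hcos : (1:ℝ)/2 ≤ Real.cos (2*π*(Θ ξ - Θ ξ₀)) := by
        have hb := Real.one_sub_sq_div_two_le_cos (x := 2*π*(Θ ξ - Θ ξ₀))
        have habs : |2*π*(Θ ξ - Θ ξ₀)| ≤ 8/50 := by
          rw [abs_mul, abs_of_pos (by positivity : (0:ℝ) < 2*π)]
          calc 2*π*|Θ ξ - Θ ξ₀| ≤ (2*4)*(1/50) :=
                mul_le_mul (by linarith [Real.pi_le_four]) (hphase ξ hmem)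
                  (abs_nonneg _) (by norm_num)
            _ = 8/50 := by norm_num
        have hsq : (2*π*(Θ ξ - Θ ξ₀))^2 ≤ (8/50)^2 := by
          rw [← sq_abs]
          exact pow_le_pow_left₀ (abs_nonneg _) habs 2
        linarith
      calc A/2 = A * (1/2) := by ring
        _ ≤ A * Real.cos (2*π*(Θ ξ - Θ ξ₀)) :=
            mul_le_mul_of_nonneg_left hcos hA0.le
    have hIntRe : IntegrableOn (fun ξ => (u * h ξ).re) B := (hIntB.const_mul u).re
    have hmono : A/2 * V ≤ ∫ ξ in B, (u * h ξ).re := by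
      have := setIntegral_mono_on
        ((continuous_const.continuousOn : ContinuousOn (fun _ : Spc n => A/2) B).integrableOn_compact hBcomp)
        hIntRe hBmeas hptwise
      calc A/2 * V = ∫ _ in B, A/2 := by rw [setIntegral_const, measureReal_def, hVB, smul_eq_mul, mul_comm]
        _ ≤ _ := this
    have hre : (u * ∫ ξ in B, h ξ).re = ∫ ξ in B, (u * h ξ).re := by
      rw [← integral_const_mul]
      simp only [← RCLike.re_to_complex]
      exact (integral_re (hIntB.const_mul u)).symm
    have hVA : A/2 * V = Real.sqrt V / 2 := by
      calc A/2 * V = (V / Real.sqrt V)/2 := by rw [hAdef]; ring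
        _ = Real.sqrt V / 2 := by rw [Real.div_sqrt]
    rw [hwx]
    calc Real.sqrt V / 2 = A/2 * V := hVA.symm
      _ ≤ (u * ∫ ξ in B, h ξ).re := by rw [hre]; exact hmono
      _ ≤ ‖u * ∫ ξ in B, h ξ‖ := Complex.re_le_norm _
      _ = ‖∫ ξ in B, h ξ‖ := by rw [norm_mul, hunorm, one_mul]
  have hScomp : IsCompact S := hSball ▸ isCompact_closedBall _ _
  have hSmeas : MeasurableSet S := hSball ▸ measurableSet_closedBall
  have hSvol : (volume S).toReal = Vb := by
    rw [hSball, Measure.addHaar_closedBall_center]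
  have hSvolne : volume S ≠ ⊤ := by rw [hSball]; exact measure_closedBall_lt_top.ne
  have hWcont : Continuous (fun x : Spc n => wave n 0 gm (t, x)) := by
    simp only [hwave0]
    apply continuous_of_dominated (bound := fun ξ => ‖gm ξ‖)
    · intro x
      exact (hintF t x).aestronglyMeasurable
    · intro x
      filter_upwards with ξ
      rw [norm_mul, norm_exp_2piI, mul_one]
    · exact hgmint.norm
    · filter_upwards with ξ
      apply continuous_const.mul
      apply Complex.continuous_exp.comp
      apply continuous_const.mul
      apply Complex.continuous_ofReal.comp
      exact continuous_const.add (Continuous.inner continuous_id continuous_const)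
  have hint : IntegrableOn (fun x : Spc n => ‖wave n 0 gm (t, x)‖^2) S :=
    ((hWcont.norm.pow 2).continuousOn).integrableOn_compact hScomp
  have := setIntegral_ge_of_const_le_real hSmeas hSvolne
    (fun x hx => by
      have h := hWlow x hx
      have h2 : (Real.sqrt V / 2)^2 ≤ ‖wave n 0 gm (t, x)‖^2 :=
        pow_le_pow_left₀ (by positivity) h 2
      calc V/4 = (Real.sqrt V / 2)^2 := by
              rw [div_pow, Real.sq_sqrt hV0.le]; norm_num
        _ ≤ _ := h2)
    hint
  calc V/4 * Vb = V/4 * (volume S).toReal := by rw [hSvol]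
    _ ≤ _ := this


end
end
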